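/- Let d, n, m be positive integers, κ > 0, and ξ ≥ 0. Let D' = (x'₁, …, x'ₙ) be a tuple with each x'_t ∈ {−κ, κ}^d, and let D̃' = (x̃'₁, …, x̃'ₘ) be any tuple of points of ℝ^d. For i ∈ [d] let C^i = {+dκ·𝟏_i, −dκ·𝟏_i}. If |cost_{C^i,2}(D̃') − cost_{C^i,2}(D')| ≤ ξ for every i ∈ [d], then (1/m) ∑_{t=1}^m ‖x̃'_t − κ·sgn(x̃'_t)‖₂² ≤ ξ. -/

import Mathlib

open scoped BigOperators

/-- `sgn v = 1` if `v ≥ 0` and `-1` if `v < 0`. -/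
noncomputable def sgn (v : ℝ) : ℝ := if 0 ≤ v then 1 else -1

/-- Coordinatewise sign of a vector in Euclidean space. -/
noncomputable def sgnVecE {d : ℕ} (y : EuclideanSpace ℝ (Fin d)) : EuclideanSpace ℝ (Fin d) :=
  WithLp.toLp 2 (fun i => sgn (y i))

/-- The `k`-means cost query in the Euclidean metric: `cost_{C,2}(x) = min_{c ∈ C} ‖x - c‖₂²`. -/
noncomputable def costE {d k : ℕ} (C : Fin k → EuclideanSpace ℝ (Fin d))
    (x : EuclideanSpace ℝ (Fin d)) : ℝ :=
  ⨅ j : Fin k, ‖x - C j‖ ^ 2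

/-- The Euclidean cost of a dataset: `cost_{C,2}(D) = (1/n) ∑_t cost_{C,2}(x_t)`. -/
noncomputable def costEData {d k n : ℕ} (C : Fin k → EuclideanSpace ℝ (Fin d))
    (D : Fin n → EuclideanSpace ℝ (Fin d)) : ℝ :=
  (∑ t, costE C (D t)) / n

lemma normsq_aux {d : ℕ} (x : EuclideanSpace ℝ (Fin d)) : ‖x‖ ^ 2 = ∑ l, x l ^ 2 := by
  rw [EuclideanSpace.norm_eq, Real.sq_sqrt (by positivity)]
  simp [sq_abs]

lemma sgn_sq_aux (v : ℝ) : sgn v ^ 2 = 1 := by unfold sgn; split <;> norm_num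

lemma mul_sgn_aux (v : ℝ) : v * sgn v = |v| := by
  unfold sgn; split
  · rw [abs_of_nonneg ‹_›]; ring
  · rw [abs_of_neg (lt_of_not_ge ‹_›)]; ring

lemma costE_pair_aux {d : ℕ} (a b x : EuclideanSpace ℝ (Fin d)) :
    costE ![a, b] x = min (‖x - a‖ ^ 2) (‖x - b‖ ^ 2) := by
  unfold costE
  apply le_antisymm
  · apply le_min
    · exact ciInf_le (f := fun j => ‖x - ![a, b] j‖ ^ 2) ⟨0, by rintro _ ⟨j, rfl⟩; positivity⟩ (0 : Fin 2)
    · exact ciInf_le (f := fun j => ‖x - ![a, b] j‖ ^ 2) ⟨0, by rintro _ ⟨j, rfl⟩; positivity⟩ (1 : Fin 2)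
  · apply le_ciInf
    intro j
    fin_cases j
    · simpa using min_le_left (‖x - a‖ ^ 2) (‖x - b‖ ^ 2)
    · simpa using min_le_right (‖x - a‖ ^ 2) (‖x - b‖ ^ 2)

lemma costE_single_aux {d : ℕ} (i : Fin d) (c : ℝ) (hc : 0 ≤ c)
    (y : EuclideanSpace ℝ (Fin d)) :
    costE ![c • EuclideanSpace.single i (1 : ℝ), (-c) • EuclideanSpace.single i (1 : ℝ)] y
      = (∑ l, y l ^ 2) - 2 * c * |y i| + c ^ 2 := by
  rw [costE_pair_aux]
  have key : ∀ s : ℝ, s ^ 2 = 1 →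
      ‖y - (s * c) • EuclideanSpace.single i (1 : ℝ)‖ ^ 2
        = (∑ l, y l ^ 2) - 2 * s * c * y i + c ^ 2 := by
    intro s hs
    rw [normsq_aux]
    have hterm : ∀ l, (y - (s * c) • EuclideanSpace.single i (1 : ℝ)) l ^ 2
        = y l ^ 2 + (if l = i then -2 * s * c * y i + s ^ 2 * c ^ 2 else 0) := by
      intro l
      have h1 : (y - (s * c) • EuclideanSpace.single i (1 : ℝ)) l
          = y l - s * c * (if l = i then (1 : ℝ) else 0) := by
        simp [EuclideanSpace.single_apply]
      rw [h1]
      split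
      · rename_i h; subst h; ring
      · ring
    rw [Finset.sum_congr rfl (fun l _ => hterm l), Finset.sum_add_distrib,
      Finset.sum_ite_eq' Finset.univ i (fun _ => -2 * s * c * y i + s ^ 2 * c ^ 2)]
    simp [hs]
    ring
  have h1 := key 1 (by norm_num)
  have h2 := key (-1) (by norm_num)
  rw [one_mul] at h1
  rw [show ((-1 : ℝ) * c) = -c by ring] at h2
  rw [h1, h2]
  rcases le_total 0 (y i) with h | h
  · rw [abs_of_nonneg h, min_eq_left (by nlinarith [mul_nonneg hc h])]
    ring
  · rw [abs_of_nonpos h, min_eq_right (by nlinarith [mul_nonneg hc (neg_nonneg.2 h)])]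
    ring

lemma F_eq_aux {d : ℕ} (κ : ℝ) (y : EuclideanSpace ℝ (Fin d)) :
    ‖y - κ • sgnVecE y‖ ^ 2
      = (∑ l, y l ^ 2) - 2 * κ * (∑ l, |y l|) + d * κ ^ 2 := by
  rw [normsq_aux]
  have hterm : ∀ l, (y - κ • sgnVecE y) l ^ 2 = y l ^ 2 - 2 * κ * |y l| + κ ^ 2 := by
    intro l
    have h1 : (y - κ • sgnVecE y) l = y l - κ * sgn (y l) := by
      simp [sgnVecE]
    rw [h1]
    have h2 : (y l - κ * sgn (y l)) ^ 2
        = y l ^ 2 - 2 * κ * (y l * sgn (y l)) + κ ^ 2 * (sgn (y l)) ^ 2 := by ring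
    rw [h2, mul_sgn_aux, sgn_sq_aux]
    ring
  rw [Finset.sum_congr rfl (fun l _ => hterm l), Finset.sum_add_distrib,
    Finset.sum_sub_distrib, ← Finset.mul_sum, Finset.sum_const, Finset.card_univ]
  simp

lemma sum_costE_aux {d : ℕ} (κ : ℝ) (hκ : 0 < κ) (y : EuclideanSpace ℝ (Fin d)) :
    ∑ i : Fin d, costE ![((d : ℝ) * κ) • EuclideanSpace.single i (1 : ℝ),
        (-((d : ℝ) * κ)) • EuclideanSpace.single i (1 : ℝ)] y
      = d * ‖y - κ • sgnVecE y‖ ^ 2 + ((d : ℝ) ^ 3 - (d : ℝ) ^ 2) * κ ^ 2 := by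
  have hc : (0 : ℝ) ≤ (d : ℝ) * κ := by positivity
  have h1 : ∀ i : Fin d, costE ![((d : ℝ) * κ) • EuclideanSpace.single i (1 : ℝ),
      (-((d : ℝ) * κ)) • EuclideanSpace.single i (1 : ℝ)] y
        = (∑ l, y l ^ 2) - 2 * ((d : ℝ) * κ) * |y i| + ((d : ℝ) * κ) ^ 2 :=
    fun i => costE_single_aux i ((d : ℝ) * κ) hc y
  rw [Finset.sum_congr rfl (fun i _ => h1 i), F_eq_aux, Finset.sum_add_distrib,
    Finset.sum_sub_distrib, ← Finset.mul_sum, Finset.sum_const, Finset.sum_const,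
    Finset.card_univ]
  simp
  ring

lemma F_zero_aux {d : ℕ} (κ : ℝ) (hκ : 0 < κ) (x : EuclideanSpace ℝ (Fin d))
    (hx : ∀ l, x l = κ ∨ x l = -κ) :
    ‖x - κ • sgnVecE x‖ ^ 2 = 0 := by
  rw [normsq_aux]
  apply Finset.sum_eq_zero
  intro l _
  have h1 : (x - κ • sgnVecE x) l = x l - κ * sgn (x l) := by simp [sgnVecE]
  rw [h1]
  rcases hx l with h | h <;> rw [h] <;> unfold sgn
  · rw [if_pos hκ.le]; ring
  · rw [if_neg (by linarith)]; ring

theorem stmt_9 (d n m : ℕ) (hd : 0 < d) (hn : 0 < n) (hm : 0 < m)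
    (κ ξ : ℝ) (hκ : 0 < κ) (hξ : 0 ≤ ξ)
    (D' : Fin n → EuclideanSpace ℝ (Fin d)) (hD' : ∀ t l, D' t l = κ ∨ D' t l = -κ)
    (Dtil : Fin m → EuclideanSpace ℝ (Fin d))
    (hacc : ∀ i : Fin d,
      |costEData ![(d * κ) • EuclideanSpace.single i (1 : ℝ),
                   (-(d * κ)) • EuclideanSpace.single i (1 : ℝ)] Dtil -
        costEData ![(d * κ) • EuclideanSpace.single i (1 : ℝ),
                    (-(d * κ)) • EuclideanSpace.single i (1 : ℝ)] D'| ≤ ξ) :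
    (∑ t, ‖Dtil t - κ • sgnVecE (Dtil t)‖ ^ 2) / m ≤ ξ := by
  set C : Fin d → Fin 2 → EuclideanSpace ℝ (Fin d) := fun i =>
    ![((d : ℝ) * κ) • EuclideanSpace.single i (1 : ℝ),
      (-((d : ℝ) * κ)) • EuclideanSpace.single i (1 : ℝ)] with hC
  set L : ℝ := (∑ t, ‖Dtil t - κ • sgnVecE (Dtil t)‖ ^ 2) / m with hL
  set c₀ : ℝ := ((d : ℝ) ^ 3 - (d : ℝ) ^ 2) * κ ^ 2 with hc₀
  have hmR : (0 : ℝ) < m := by exact_mod_cast hm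
  have hnR : (0 : ℝ) < n := by exact_mod_cast hn
  have hdR : (0 : ℝ) < d := by exact_mod_cast hd
  have hDtil : ∑ i : Fin d, costEData (C i) Dtil = d * L + c₀ := by
    unfold costEData
    rw [← Finset.sum_div, Finset.sum_comm]
    have : ∀ t : Fin m, ∑ i : Fin d, costE (C i) (Dtil t)
        = d * ‖Dtil t - κ • sgnVecE (Dtil t)‖ ^ 2 + c₀ :=
      fun t => sum_costE_aux κ hκ (Dtil t)
    rw [Finset.sum_congr rfl (fun t _ => this t), Finset.sum_add_distrib,
      ← Finset.mul_sum, Finset.sum_const, Finset.card_univ]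
    simp only [Fintype.card_fin, nsmul_eq_mul]
    rw [hL]
    field_simp
  have hDp : ∑ i : Fin d, costEData (C i) D' = c₀ := by
    unfold costEData
    rw [← Finset.sum_div, Finset.sum_comm]
    have : ∀ t : Fin n, ∑ i : Fin d, costE (C i) (D' t) = c₀ := by
      intro t
      rw [sum_costE_aux κ hκ (D' t), F_zero_aux κ hκ (D' t) (hD' t)]
      ring
    rw [Finset.sum_congr rfl (fun t _ => this t), Finset.sum_const, Finset.card_univ]
    simp only [Fintype.card_fin, nsmul_eq_mul]
    field_simp
  have key : (d : ℝ) * L ≤ (d : ℝ) * ξ := by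
    have h1 : (d : ℝ) * L = ∑ i : Fin d, (costEData (C i) Dtil - costEData (C i) D') := by
      rw [Finset.sum_sub_distrib, hDtil, hDp]; ring
    have h2 : ∑ i : Fin d, (costEData (C i) Dtil - costEData (C i) D')
        ≤ ∑ i : Fin d, ξ := by
      apply Finset.sum_le_sum
      intro i _
      have := hacc i
      have habs : |costEData (C i) Dtil - costEData (C i) D'| ≤ ξ := by
        simpa [hC] using this
      exact le_trans (le_abs_self _) habs
    rw [h1]
    simpa using h2
  exact le_of_mul_le_mul_left key hdR
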